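/- arXiv:2305.15632 — 2 statements merged into one kernel-verified Lean document; each statement's English description precedes it below -/
import Mathlib

section
/- In the synchronous vertex process of discrete incremental voting on an arbitrary finite graph G with minimum degree at least 1, the degree-biased weight process (Z(t))_{t≥0}, where Z(t) = n Σ_{v∈V} π_v X_v(t) and π_v = d(v)/(2m), is a martingale with respect to the natural filtration of the process: E[Z(t+1) | X(t)] = Z(t) for every t ≥ 0. -/
/-!
STATEMENT 2: In the synchronous vertex process of discrete incremental voting on an
arbitrary finite graph `G` with minimum degree at least 1, the degree-biased weight
`Z(t) = n ∑_v π_v X_v(t)`, where `π_v = d(v)/(2m)`, is a martingale with respect to the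
natural filtration: `E[Z(t+1) | X(t)] = Z(t)` for every `t ≥ 0`.

Since the process is a time-homogeneous Markov chain, this is formalized as:
for every configuration `x` (the value of `X(t)`), the expectation of `Z` under the
one-step transition distribution from `x` equals `Z x`.  In the synchronous process
every vertex simultaneously and independently chooses a uniformly random neighbour and
updates using it; the joint choice is uniform on `Π v, neighbours of v`.
-/

namespace IncrementalVoting2

/-- The incremental voting update rule. -/
def updateRule (a b : ℤ) : ℤ := if a < b then a + 1 else if b < a then a - 1 else a

/-- Expected value of a real-valued function under a probability mass function. -/
noncomputable def expVal {α : Type*} (p : PMF α) (f : α → ℝ) : ℝ :=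
  ∑' a, (p a).toReal * f a

variable {V : Type} [Fintype V] [DecidableEq V]

/-- One step of the synchronous vertex process: each vertex `v` independently chooses a
uniformly random neighbour `c v` and updates using it (all updates use the old opinions).
The joint choice `c` is uniformly distributed on `Π v, neighbours of v`. -/
noncomputable def syncStep (G : SimpleGraph V) [DecidableRel G.Adj]
    (hdeg : ∀ v, 0 < G.degree v) (x : V → ℤ) : PMF (V → ℤ) :=
  haveI : ∀ v : V, Nonempty (G.neighborFinset v) :=
    fun v => (Finset.card_pos.mp (hdeg v)).to_subtype
  (PMF.uniformOfFintype (Π v : V, G.neighborFinset v)).map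
    fun c => fun v => updateRule (x v) (x (c v))

/-- The degree-biased weight `Z x = n ∑_v π_v x_v` with `π_v = d(v)/(2m)`. -/
noncomputable def Z (G : SimpleGraph V) [DecidableRel G.Adj] (x : V → ℤ) : ℝ :=
  (Fintype.card V : ℝ) *
    ∑ v, ((G.degree v : ℝ) / (2 * (G.edgeFinset.card : ℝ))) * (x v : ℝ)

/-- Expected value under the pushforward of the uniform distribution on a finite type. -/
lemma expVal_map_uniform {α : Type*} {β : Type*} [Fintype α] [Nonempty α]
    (g : α → β) (f : β → ℝ) :
    expVal ((PMF.uniformOfFintype α).map g) f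
      = (Fintype.card α : ℝ)⁻¹ * ∑ a, f (g a) := by
  classical
  unfold expVal
  rw [tsum_eq_sum (s := Finset.image g Finset.univ)
    (by
      intro b hb
      have h0 : ((PMF.uniformOfFintype α).map g) b = 0 := by
        rw [PMF.map_apply]
        refine Summable.tsum_eq_zero_iff (by exact ENNReal.summable) |>.mpr fun a => ?_
        have : b ≠ g a := fun h => hb (h ▸ Finset.mem_image_of_mem g (Finset.mem_univ a))
        simp [this]
      simp [h0])]
  have hterm : ∀ b ∈ Finset.image g Finset.univ,
      (((PMF.uniformOfFintype α).map g) b).toReal * f b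
        = ∑ a : α, (if b = g a then (Fintype.card α : ℝ)⁻¹ * f b else 0) := by
    intro b _
    rw [PMF.map_apply, tsum_fintype, ENNReal.toReal_sum
      (by intro a _; split_ifs <;>
        simp [PMF.uniformOfFintype_apply, ENNReal.inv_ne_top, Fintype.card_ne_zero]),
      Finset.sum_mul]
    refine Finset.sum_congr rfl fun a _ => ?_
    split_ifs with h
    · simp [PMF.uniformOfFintype_apply, ENNReal.toReal_inv]
    · simp
  rw [Finset.sum_congr rfl hterm, Finset.sum_comm]
  rw [Finset.mul_sum]
  refine Finset.sum_congr rfl fun a _ => ?_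
  have : ∀ b ∈ Finset.image g Finset.univ,
      (if b = g a then (Fintype.card α : ℝ)⁻¹ * f b else 0)
        = (if b = g a then (Fintype.card α : ℝ)⁻¹ * f (g a) else 0) := by
    intro b _; split_ifs with h <;> simp [h]
  rw [Finset.sum_congr rfl this, Finset.sum_ite_eq' (Finset.image g Finset.univ) (g a)]
  simp [Finset.mem_image_of_mem]

/-- Averaging a function of a single coordinate over a uniform product. -/
lemma avg_eval {A : V → Type*} [∀ v, Fintype (A v)] [∀ v, Nonempty (A v)]
    (v0 : V) (h : A v0 → ℝ) :
    (Fintype.card (Π v, A v) : ℝ)⁻¹ * ∑ c : Π v, A v, h (c v0)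
      = (Fintype.card (A v0) : ℝ)⁻¹ * ∑ a : A v0, h a := by
  classical
  have hsum : ∑ c : Π v, A v, h (c v0)
      = (Fintype.card (Π j : {j // j ≠ v0}, A (j : V)) : ℝ) * ∑ a : A v0, h a := by
    rw [← Equiv.sum_comp (Equiv.piSplitAt v0 A).symm (fun c => h (c v0))]
    have heval : ∀ p : A v0 × (Π j : {j // j ≠ v0}, A (j : V)),
        h ((Equiv.piSplitAt v0 A).symm p v0) = h p.1 := by
      intro p; congr 1; simp [Equiv.piSplitAt_symm_apply]
    rw [Finset.sum_congr rfl (fun p _ => heval p), Fintype.sum_prod_type]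
    simp only [Finset.sum_const, Finset.card_univ, nsmul_eq_mul]
    rw [← Finset.mul_sum]
  have hcard : (Fintype.card (Π v, A v) : ℝ)
      = (Fintype.card (A v0) : ℝ) * (Fintype.card (Π j : {j // j ≠ v0}, A (j : V)) : ℝ) := by
    rw [← Nat.cast_mul, ← Fintype.card_prod]
    exact_mod_cast congrArg (Nat.cast (R := ℝ)) (Fintype.card_congr (Equiv.piSplitAt v0 A))
  have h1 : (Fintype.card (A v0) : ℝ) ≠ 0 := by
    exact_mod_cast Fintype.card_ne_zero
  have h2 : (Fintype.card (Π j : {j // j ≠ v0}, A (j : V)) : ℝ) ≠ 0 := by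
    exact_mod_cast Fintype.card_ne_zero
  rw [hsum, hcard]
  field_simp

/-- The update rule increment is antisymmetric. -/
lemma update_antisymm (a b : ℤ) : updateRule a b - a = -(updateRule b a - b) := by
  unfold updateRule
  split_ifs <;> omega

/-- The key combinatorial identity: summing the updated opinions over all ordered
adjacent pairs gives the same total as summing the old opinions. -/
lemma sum_update_eq (G : SimpleGraph V) [DecidableRel G.Adj] (x : V → ℤ) :
    ∑ v, ∑ w ∈ G.neighborFinset v, updateRule (x v) (x w)
      = ∑ v, ∑ w ∈ G.neighborFinset v, x v := by
  classical
  have hS : ∑ v, ∑ w ∈ G.neighborFinset v, (updateRule (x v) (x w) - x v) = 0 := by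
    set S := ∑ v, ∑ w ∈ G.neighborFinset v, (updateRule (x v) (x w) - x v) with hSdef
    have hswap : S = -S := by
      calc S = ∑ v, ∑ w, (if G.Adj v w then updateRule (x v) (x w) - x v else 0) := by
              refine Finset.sum_congr rfl fun v _ => ?_
              rw [SimpleGraph.neighborFinset_eq_filter, Finset.sum_filter]
        _ = ∑ w, ∑ v, (if G.Adj v w then updateRule (x v) (x w) - x v else 0) :=
              Finset.sum_comm
        _ = ∑ w, ∑ v, (if G.Adj w v then -(updateRule (x w) (x v) - x w) else 0) := by
              refine Finset.sum_congr rfl fun w _ => Finset.sum_congr rfl fun v _ => ?_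
              by_cases hadj : G.Adj v w
              · rw [if_pos hadj, if_pos ((G.adj_comm v w).mp hadj), update_antisymm]
              · rw [if_neg hadj, if_neg fun h => hadj ((G.adj_comm w v).mp h)]
        _ = -∑ w, ∑ v, (if G.Adj w v then updateRule (x w) (x v) - x w else 0) := by
              rw [← Finset.sum_neg_distrib]
              refine Finset.sum_congr rfl fun w _ => ?_
              rw [← Finset.sum_neg_distrib]
              refine Finset.sum_congr rfl fun v _ => ?_
              split_ifs <;> simp
        _ = -S := by
              congr 1
              refine Finset.sum_congr rfl fun w _ => ?_
              rw [SimpleGraph.neighborFinset_eq_filter, Finset.sum_filter]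
    omega
  have := hS
  rw [Finset.sum_congr rfl (fun v _ => Finset.sum_sub_distrib
    (f := fun w => updateRule (x v) (x w)) (g := fun _ => x v)),
    Finset.sum_sub_distrib, sub_eq_zero] at this
  exact this

/-- **The degree-biased weight is a martingale for the synchronous vertex process**:
the conditional expectation of `Z(t+1)` given `X(t) = x` equals `Z x`, for any
finite graph with minimum degree at least 1. -/
theorem sync_vertex_process_degree_biased_weight_martingale
    (G : SimpleGraph V) [DecidableRel G.Adj] (hdeg : ∀ v, 0 < G.degree v) (x : V → ℤ) :
    expVal (syncStep G hdeg x) (Z G) = Z G x := by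
  classical
  haveI : ∀ v : V, Nonempty (G.neighborFinset v) :=
    fun v => (Finset.card_pos.mp (hdeg v)).to_subtype
  rw [syncStep, expVal_map_uniform]
  unfold Z
  set M : ℝ := 2 * (G.edgeFinset.card : ℝ) with hM
  set n : ℝ := (Fintype.card V : ℝ) with hn
  set C : ℝ := (Fintype.card (Π v : V, (G.neighborFinset v : Finset V)) : ℝ) with hC
  have key : ∀ v : V,
      (Fintype.card (G.neighborFinset v) : ℝ)⁻¹ *
          ∑ a : (G.neighborFinset v : Finset V), ((updateRule (x v) (x a) : ℤ) : ℝ)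
        = C⁻¹ * ∑ c : Π v : V, (G.neighborFinset v : Finset V),
            ((updateRule (x v) (x (c v)) : ℤ) : ℝ) :=
    fun v => (avg_eval (A := fun v => ((G.neighborFinset v : Finset V) : Type)) v
      (fun a => ((updateRule (x v) (x a) : ℤ) : ℝ))).symm
  have step1 :
      C⁻¹ * ∑ c : Π v : V, (G.neighborFinset v : Finset V),
          n * ∑ v, ((G.degree v : ℝ) / M) * ((updateRule (x v) (x (c v)) : ℤ) : ℝ)
      = n * ∑ v, ((G.degree v : ℝ) / M) *
            ((Fintype.card (G.neighborFinset v) : ℝ)⁻¹ *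
              ∑ a : (G.neighborFinset v : Finset V), ((updateRule (x v) (x a) : ℤ) : ℝ)) := by
    calc C⁻¹ * ∑ c : Π v : V, (G.neighborFinset v : Finset V),
            n * ∑ v, ((G.degree v : ℝ) / M) * ((updateRule (x v) (x (c v)) : ℤ) : ℝ)
        = ∑ c : Π v : V, (G.neighborFinset v : Finset V),
            ∑ v, n * C⁻¹ * (((G.degree v : ℝ) / M) * ((updateRule (x v) (x (c v)) : ℤ) : ℝ)) := by
          rw [Finset.mul_sum]
          refine Finset.sum_congr rfl fun c _ => ?_
          rw [← mul_assoc, Finset.mul_sum]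
          exact Finset.sum_congr rfl fun v _ => by ring
      _ = ∑ v, ∑ c : Π v : V, (G.neighborFinset v : Finset V),
            n * C⁻¹ * (((G.degree v : ℝ) / M) * ((updateRule (x v) (x (c v)) : ℤ) : ℝ)) :=
          Finset.sum_comm
      _ = ∑ v, n * (((G.degree v : ℝ) / M) *
            (C⁻¹ * ∑ c : Π v : V, (G.neighborFinset v : Finset V),
              ((updateRule (x v) (x (c v)) : ℤ) : ℝ))) := by
          refine Finset.sum_congr rfl fun v _ => ?_
          conv_rhs => rw [Finset.mul_sum, Finset.mul_sum, Finset.mul_sum]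
          exact Finset.sum_congr rfl fun c _ => by ring
      _ = ∑ v, n * (((G.degree v : ℝ) / M) *
            ((Fintype.card (G.neighborFinset v) : ℝ)⁻¹ *
              ∑ a : (G.neighborFinset v : Finset V), ((updateRule (x v) (x a) : ℤ) : ℝ))) := by
          exact Finset.sum_congr rfl fun v _ => by rw [key v]
      _ = n * ∑ v, ((G.degree v : ℝ) / M) *
            ((Fintype.card (G.neighborFinset v) : ℝ)⁻¹ *
              ∑ a : (G.neighborFinset v : Finset V), ((updateRule (x v) (x a) : ℤ) : ℝ)) :=
          (Finset.mul_sum _ _ _).symm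
  rw [step1]
  congr 1
  -- Step 2: per-vertex coefficients
  have hdv : ∀ v : V, (G.degree v : ℝ) ≠ 0 := fun v => by
    exact_mod_cast (hdeg v).ne'
  have hA : ∀ v : V, ((G.degree v : ℝ) / M) *
        ((Fintype.card (G.neighborFinset v) : ℝ)⁻¹ *
          ∑ a : (G.neighborFinset v : Finset V), ((updateRule (x v) (x a) : ℤ) : ℝ))
      = M⁻¹ * ∑ w ∈ G.neighborFinset v, ((updateRule (x v) (x w) : ℤ) : ℝ) := by
    intro v
    rw [Finset.sum_coe_sort (G.neighborFinset v)
      (fun w => ((updateRule (x v) (x w) : ℤ) : ℝ))]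
    rw [Fintype.card_coe, SimpleGraph.card_neighborFinset_eq_degree]
    rw [div_eq_mul_inv]
    rw [show (G.degree v : ℝ) * M⁻¹ *
          (((G.degree v : ℝ))⁻¹ * ∑ w ∈ G.neighborFinset v, ((updateRule (x v) (x w) : ℤ) : ℝ))
        = ((G.degree v : ℝ) * ((G.degree v : ℝ))⁻¹) *
          (M⁻¹ * ∑ w ∈ G.neighborFinset v, ((updateRule (x v) (x w) : ℤ) : ℝ)) by ring]
    rw [mul_inv_cancel₀ (hdv v), one_mul]
  have hB : ∀ v : V, ((G.degree v : ℝ) / M) * ((x v : ℤ) : ℝ)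
      = M⁻¹ * ∑ w ∈ G.neighborFinset v, ((x v : ℤ) : ℝ) := by
    intro v
    rw [Finset.sum_const, SimpleGraph.card_neighborFinset_eq_degree, nsmul_eq_mul,
      div_eq_mul_inv]
    ring
  rw [Finset.sum_congr rfl fun v _ => hA v, Finset.sum_congr rfl fun v _ => hB v,
    ← Finset.mul_sum, ← Finset.mul_sum]
  congr 1
  exact_mod_cast sum_update_eq G x

end IncrementalVoting2
end

section
/- Properties of G_{n,p}, edges between large sets: let G ∈ G_{n,p} with np ≥ (log n)^{1+ε} for some constant ε > 0, and let δ ≥ 5/√(np). Then with high probability, simultaneously for every pair of disjoint vertex sets A, B with |A| ≥ δn and |B| ≥ δn, the number X_{AB} of edges of G between A and B satisfies μ/2 ≤ X_{AB} ≤ 3μ/2, where μ = |A|·|B|·p. -/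
/-!
STATEMENT 17: Properties of `G_{n,p}`, edges between large sets: let `G ∈ G_{n,p}` with
`np ≥ (log n)^{1+ε}` for a constant `ε > 0`, and let `δ ≥ 5/√(np)`.  Then with high
probability, simultaneously for every pair of disjoint vertex sets `A`, `B` with
`|A| ≥ δn` and `|B| ≥ δn`, the number `X_{AB}` of edges between `A` and `B` satisfies
`μ/2 ≤ X_{AB} ≤ 3μ/2`, where `μ = |A|·|B|·p`.
-/

namespace Gnp17

open MeasureTheory

/-- The Erdős–Rényi measure: each pair of distinct vertices is an edge independently
with probability `p`. -/
noncomputable def gnpMeasure (n : ℕ) (p : ℝ) (h1 : p ≤ 1) :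
    Measure (Sym2 (Fin n) → Bool) :=
  Measure.pi fun _ =>
    (PMF.bernoulli (Real.toNNReal p) (by
      simpa using h1)).toMeasure

/-- The random graph determined by `ω`. -/
def graphOf (n : ℕ) (ω : Sym2 (Fin n) → Bool) : SimpleGraph (Fin n) :=
  SimpleGraph.fromRel fun u v => ω s(u, v)

/-- The number of edges of the random graph between the (disjoint) sets `A` and `B`. -/
noncomputable def edgesBetween (n : ℕ) (ω : Sym2 (Fin n) → Bool)
    (A B : Finset (Fin n)) : ℝ :=
  letI : DecidableRel (graphOf n ω).Adj := Classical.decRel _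
  ∑ a ∈ A, ∑ b ∈ B, if (graphOf n ω).Adj a b then (1 : ℝ) else 0

open Finset


noncomputable def W (n : ℕ) (p : ℝ) (ω : Sym2 (Fin n) → Bool) : ℝ :=
  ∏ e : Sym2 (Fin n), (if ω e then p else 1 - p)

lemma W_nonneg {n : ℕ} {p : ℝ} (hp0 : 0 ≤ p) (hp1 : p ≤ 1) (ω : Sym2 (Fin n) → Bool) :
    0 ≤ W n p ω :=
  Finset.prod_nonneg fun e _ => by split <;> linarith

lemma master {n : ℕ} {p : ℝ} (E' : Finset (Sym2 (Fin n))) (g : Bool → ℝ) :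
    ∑ ω : Sym2 (Fin n) → Bool, W n p ω * ∏ e ∈ E', g (ω e)
      = (p * g true + (1 - p) * g false) ^ E'.card := by
  have h1 : ∀ ω : Sym2 (Fin n) → Bool,
      W n p ω * ∏ e ∈ E', g (ω e)
        = ∏ e : Sym2 (Fin n),
            ((if ω e then p else 1 - p) * (if e ∈ E' then g (ω e) else 1)) := by
    intro ω
    rw [Finset.prod_mul_distrib, W]
    congr 1
    rw [Finset.prod_ite_mem, Finset.univ_inter]
  simp_rw [h1]
  rw [← Fintype.prod_sum (fun e b => (if b then p else 1 - p) * (if e ∈ E' then g b else 1))]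
  have h2 : ∀ e : Sym2 (Fin n),
      (∑ b : Bool, (if b then p else 1 - p) * (if e ∈ E' then g b else 1))
        = if e ∈ E' then p * g true + (1 - p) * g false else 1 := by
    intro e
    by_cases h : e ∈ E' <;> simp [Fintype.sum_bool, h] <;> ring
  rw [Finset.prod_congr rfl (fun e _ => h2 e), Finset.prod_ite_mem, Finset.univ_inter,
    Finset.prod_const]

lemma sum_W {n : ℕ} {p : ℝ} : ∑ ω : Sym2 (Fin n) → Bool, W n p ω = 1 := by
  have := master (n := n) (p := p) ∅ (fun _ => 1)
  simpa using this

open Real in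
lemma chernoff_ge {n : ℕ} {p : ℝ} (hp0 : 0 ≤ p) (hp1 : p ≤ 1)
    (E' : Finset (Sym2 (Fin n))) (a t : ℝ) (ht : 0 ≤ t) :
    ∑ ω ∈ Finset.univ.filter
        (fun ω : Sym2 (Fin n) → Bool => a ≤ ∑ e ∈ E', (if ω e then (1:ℝ) else 0)),
      W n p ω
      ≤ Real.exp (-(t*a)) * (p * Real.exp t + (1 - p)) ^ E'.card := by
  classical
  set X : (Sym2 (Fin n) → Bool) → ℝ := fun ω => ∑ e ∈ E', (if ω e then (1:ℝ) else 0) with hX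
  have key : ∀ ω, Real.exp (-(t*a)) * Real.exp (t * X ω)
      = Real.exp (-(t*a)) * ∏ e ∈ E', (if ω e then Real.exp t else 1) := by
    intro ω
    congr 1
    rw [hX, Finset.mul_sum, Real.exp_sum]
    exact Finset.prod_congr rfl fun e _ => by by_cases h : ω e <;> simp [h]
  calc ∑ ω ∈ Finset.univ.filter (fun ω => a ≤ X ω), W n p ω
      ≤ ∑ ω ∈ Finset.univ.filter (fun ω => a ≤ X ω),
          W n p ω * (Real.exp (-(t*a)) * Real.exp (t * X ω)) := by
        apply Finset.sum_le_sum
        intro ω hω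
        have haX : a ≤ X ω := (Finset.mem_filter.mp hω).2
        have h1 : (1:ℝ) ≤ Real.exp (-(t*a)) * Real.exp (t * X ω) := by
          rw [← Real.exp_add]
          have : (0:ℝ) ≤ -(t*a) + t * X ω := by nlinarith
          calc (1:ℝ) = Real.exp 0 := (Real.exp_zero).symm
            _ ≤ _ := Real.exp_le_exp.mpr this
        exact le_mul_of_one_le_right (W_nonneg hp0 hp1 ω) h1
    _ ≤ ∑ ω : Sym2 (Fin n) → Bool,
          W n p ω * (Real.exp (-(t*a)) * Real.exp (t * X ω)) := by
        apply Finset.sum_le_sum_of_subset_of_nonneg (Finset.filter_subset _ _)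
        intro ω _ _
        have := Real.exp_pos (-(t*a) + t * X ω)
        rw [← Real.exp_add] at *
        nlinarith [W_nonneg hp0 hp1 ω, Real.exp_pos (-(t*a) + t * X ω)]
    _ = Real.exp (-(t*a)) * ∑ ω : Sym2 (Fin n) → Bool,
          W n p ω * ∏ e ∈ E', (if ω e then Real.exp t else 1) := by
        rw [Finset.mul_sum]
        exact Finset.sum_congr rfl fun ω _ => by rw [key ω]; ring
    _ = Real.exp (-(t*a)) * (p * Real.exp t + (1 - p)) ^ E'.card := by
        rw [master E' (fun b => if b then Real.exp t else 1)]
        simp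

open Real in
lemma chernoff_le {n : ℕ} {p : ℝ} (hp0 : 0 ≤ p) (hp1 : p ≤ 1)
    (E' : Finset (Sym2 (Fin n))) (a t : ℝ) (ht : 0 ≤ t) :
    ∑ ω ∈ Finset.univ.filter
        (fun ω : Sym2 (Fin n) → Bool => (∑ e ∈ E', (if ω e then (1:ℝ) else 0)) ≤ a),
      W n p ω
      ≤ Real.exp (t*a) * (p * Real.exp (-t) + (1 - p)) ^ E'.card := by
  classical
  set X : (Sym2 (Fin n) → Bool) → ℝ := fun ω => ∑ e ∈ E', (if ω e then (1:ℝ) else 0) with hX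
  have key : ∀ ω, Real.exp (t*a) * Real.exp (-t * X ω)
      = Real.exp (t*a) * ∏ e ∈ E', (if ω e then Real.exp (-t) else 1) := by
    intro ω
    congr 1
    rw [hX, Finset.mul_sum, Real.exp_sum]
    exact Finset.prod_congr rfl fun e _ => by by_cases h : ω e <;> simp [h]
  calc ∑ ω ∈ Finset.univ.filter (fun ω => X ω ≤ a), W n p ω
      ≤ ∑ ω ∈ Finset.univ.filter (fun ω => X ω ≤ a),
          W n p ω * (Real.exp (t*a) * Real.exp (-t * X ω)) := by
        apply Finset.sum_le_sum
        intro ω hω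
        have haX : X ω ≤ a := (Finset.mem_filter.mp hω).2
        have h1 : (1:ℝ) ≤ Real.exp (t*a) * Real.exp (-t * X ω) := by
          rw [← Real.exp_add]
          have : (0:ℝ) ≤ t*a + (-t) * X ω := by nlinarith
          calc (1:ℝ) = Real.exp 0 := (Real.exp_zero).symm
            _ ≤ _ := Real.exp_le_exp.mpr this
        exact le_mul_of_one_le_right (W_nonneg hp0 hp1 ω) h1
    _ ≤ ∑ ω : Sym2 (Fin n) → Bool,
          W n p ω * (Real.exp (t*a) * Real.exp (-t * X ω)) := by
        apply Finset.sum_le_sum_of_subset_of_nonneg (Finset.filter_subset _ _)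
        intro ω _ _
        rw [← Real.exp_add]
        nlinarith [W_nonneg hp0 hp1 ω, Real.exp_pos (t*a + -t * X ω)]
    _ = Real.exp (t*a) * ∑ ω : Sym2 (Fin n) → Bool,
          W n p ω * ∏ e ∈ E', (if ω e then Real.exp (-t) else 1) := by
        rw [Finset.mul_sum]
        exact Finset.sum_congr rfl fun ω _ => by rw [key ω]; ring
    _ = Real.exp (t*a) * (p * Real.exp (-t) + (1 - p)) ^ E'.card := by
        rw [master E' (fun b => if b then Real.exp (-t) else 1)]
        simp

lemma exp_half_le : Real.exp (1/2 : ℝ) ≤ 5/3 := by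
  have h2 : Real.exp (1/2 : ℝ) * Real.exp (1/2 : ℝ) = Real.exp 1 := by
    rw [← Real.exp_add]; norm_num
  nlinarith [Real.exp_pos (1/2 : ℝ), Real.exp_one_lt_d9]

lemma exp_neg_half_le : Real.exp (-(1/2) : ℝ) ≤ 2/3 := by
  have h2 : Real.exp (-(1/2) : ℝ) * Real.exp (1/2 : ℝ) = 1 := by
    rw [← Real.exp_add]; norm_num
  have h3 : (3/2 : ℝ) ≤ Real.exp (1/2 : ℝ) := by
    nlinarith [Real.exp_pos (1/2 : ℝ), Real.exp_one_gt_d9,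
      (by rw [← Real.exp_add]; norm_num : Real.exp (1/2 : ℝ) * Real.exp (1/2 : ℝ) = Real.exp 1)]
  nlinarith [Real.exp_pos (-(1/2) : ℝ)]

/-- Base bound: `p * exp t + (1 - p) ≤ exp (p * (exp t - 1))`. -/
lemma base_le {p : ℝ} (t : ℝ) : p * Real.exp t + (1 - p) ≤ Real.exp (p * (Real.exp t - 1)) := by
  have := Real.add_one_le_exp (p * (Real.exp t - 1))
  nlinarith

lemma tail_upper {n : ℕ} {p : ℝ} (hp0 : 0 ≤ p) (hp1 : p ≤ 1)
    (E' : Finset (Sym2 (Fin n))) :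
    ∑ ω ∈ Finset.univ.filter
        (fun ω : Sym2 (Fin n) → Bool =>
          3 * ((E'.card : ℝ) * p) / 2 ≤ ∑ e ∈ E', (if ω e then (1:ℝ) else 0)),
      W n p ω
      ≤ Real.exp (-((E'.card : ℝ) * p / 12)) := by
  set μ : ℝ := (E'.card : ℝ) * p with hμ
  have hμ0 : 0 ≤ μ := mul_nonneg (Nat.cast_nonneg _) hp0
  have h := chernoff_ge hp0 hp1 E' (3 * μ / 2) (1/2) (by norm_num)
  refine h.trans ?_
  have hbase0 : 0 ≤ p * Real.exp (1/2) + (1 - p) := by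
    nlinarith [Real.exp_pos (1/2 : ℝ), Real.exp_le_exp.mpr (by norm_num : (0:ℝ) ≤ 1/2),
      Real.exp_zero]
  have h1 : (p * Real.exp (1/2) + (1 - p)) ^ E'.card
      ≤ Real.exp (p * (Real.exp (1/2) - 1)) ^ E'.card :=
    pow_le_pow_left₀ hbase0 (base_le _) _
  have h2 : Real.exp (p * (Real.exp (1/2) - 1)) ^ E'.card
      = Real.exp ((E'.card : ℝ) * (p * (Real.exp (1/2) - 1))) := by
    rw [Real.exp_nat_mul]
  calc Real.exp (-(1/2 * (3 * μ / 2))) * (p * Real.exp (1/2) + (1 - p)) ^ E'.card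
      ≤ Real.exp (-(1/2 * (3 * μ / 2))) * Real.exp ((E'.card : ℝ) * (p * (Real.exp (1/2) - 1))) := by
        apply mul_le_mul_of_nonneg_left _ (Real.exp_pos _).le
        rw [← h2] at *; exact h1
    _ = Real.exp (-(1/2 * (3 * μ / 2)) + μ * (Real.exp (1/2) - 1)) := by
        rw [← Real.exp_add, hμ]; ring_nf
    _ ≤ Real.exp (-(μ / 12)) := by
        apply Real.exp_le_exp.mpr
        nlinarith [exp_half_le]

lemma tail_lower {n : ℕ} {p : ℝ} (hp0 : 0 ≤ p) (hp1 : p ≤ 1)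
    (E' : Finset (Sym2 (Fin n))) :
    ∑ ω ∈ Finset.univ.filter
        (fun ω : Sym2 (Fin n) → Bool =>
          (∑ e ∈ E', (if ω e then (1:ℝ) else 0)) ≤ (E'.card : ℝ) * p / 2),
      W n p ω
      ≤ Real.exp (-((E'.card : ℝ) * p / 12)) := by
  set μ : ℝ := (E'.card : ℝ) * p with hμ
  have hμ0 : 0 ≤ μ := mul_nonneg (Nat.cast_nonneg _) hp0
  have h := chernoff_le hp0 hp1 E' (μ / 2) (1/2) (by norm_num)
  refine h.trans ?_
  have hbase0 : 0 ≤ p * Real.exp (-(1/2)) + (1 - p) := by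
    nlinarith [Real.exp_pos (-(1/2) : ℝ)]
  have h1 : (p * Real.exp (-(1/2)) + (1 - p)) ^ E'.card
      ≤ Real.exp (p * (Real.exp (-(1/2)) - 1)) ^ E'.card :=
    pow_le_pow_left₀ hbase0 (base_le _) _
  have h2 : Real.exp (p * (Real.exp (-(1/2)) - 1)) ^ E'.card
      = Real.exp ((E'.card : ℝ) * (p * (Real.exp (-(1/2)) - 1))) := by
    rw [Real.exp_nat_mul]
  have hcast : Real.exp (-(1/2 : ℝ)) = Real.exp (-(1/2)) := rfl
  calc Real.exp (1/2 * (μ / 2)) * (p * Real.exp (-(1/2)) + (1 - p)) ^ E'.card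
      ≤ Real.exp (1/2 * (μ / 2)) * Real.exp ((E'.card : ℝ) * (p * (Real.exp (-(1/2)) - 1))) := by
        apply mul_le_mul_of_nonneg_left _ (Real.exp_pos _).le
        rw [← h2] at *; exact h1
    _ = Real.exp (1/2 * (μ / 2) + μ * (Real.exp (-(1/2)) - 1)) := by
        rw [← Real.exp_add, hμ]; ring_nf
    _ ≤ Real.exp (-(μ / 12)) := by
        apply Real.exp_le_exp.mpr
        nlinarith [exp_neg_half_le]

lemma gnp_singleton {n : ℕ} {p : ℝ} (hp0 : 0 ≤ p) (hp1 : p ≤ 1)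
    (ω : Sym2 (Fin n) → Bool) :
    gnpMeasure n p hp1 {ω} = ENNReal.ofReal (W n p ω) := by
  rw [gnpMeasure, ← Set.univ_pi_singleton ω, Measure.pi_pi]
  have h1 : ∀ e : Sym2 (Fin n),
      (PMF.bernoulli (Real.toNNReal p) (by
        simpa using hp1)).toMeasure {ω e}
        = ENNReal.ofReal (if ω e then p else 1 - p) := by
    intro e
    rw [PMF.toMeasure_apply_singleton _ _ (measurableSet_singleton _), PMF.bernoulli_apply]
    cases h : ω e with
    | true => simp [ENNReal.ofReal]
    | false =>
        simp only [Bool.cond_false, Bool.false_eq_true, if_false]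
        change (1 : ENNReal) - ENNReal.ofReal p = _
        rw [← ENNReal.ofReal_one, ← ENNReal.ofReal_sub _ hp0]
  rw [Finset.prod_congr rfl (fun e _ => h1 e), W,
    ← ENNReal.ofReal_prod_of_nonneg (fun e _ => by split <;> linarith)]

lemma gnp_apply {n : ℕ} {p : ℝ} (hp0 : 0 ≤ p) (hp1 : p ≤ 1)
    (F : Finset (Sym2 (Fin n) → Bool)) :
    gnpMeasure n p hp1 ↑F = ENNReal.ofReal (∑ ω ∈ F, W n p ω) := by
  have h1 : (↑F : Set (Sym2 (Fin n) → Bool)) = ⋃ ω ∈ F, {ω} := by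
    ext ω; simp
  rw [h1, measure_biUnion_finset (fun x _ y _ hxy => by simp [hxy])
    (fun ω _ => measurableSet_singleton ω)]
  rw [Finset.sum_congr rfl (fun ω _ => gnp_singleton hp0 hp1 ω),
    ← ENNReal.ofReal_sum_of_nonneg (fun ω _ => W_nonneg hp0 hp1 ω)]

lemma sum_biUnion_le' {ι Ω' : Type*} [DecidableEq Ω'] (s : Finset ι) (f : ι → Finset Ω')
    (g : Ω' → ℝ) (hg : ∀ ω, 0 ≤ g ω) :
    ∑ ω ∈ s.biUnion f, g ω ≤ ∑ i ∈ s, ∑ ω ∈ f i, g ω := by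
  classical
  induction s using Finset.induction with
  | empty => simp
  | insert a s' hx ih =>
      rw [Finset.biUnion_insert, Finset.sum_insert hx]
      have h1 : ∑ ω ∈ f a ∪ s'.biUnion f, g ω
          ≤ ∑ ω ∈ f a, g ω + ∑ ω ∈ s'.biUnion f, g ω := by
        have := Finset.sum_union_inter (s₁ := f a) (s₂ := s'.biUnion f) (f := g)
        have h2 : 0 ≤ ∑ ω ∈ f a ∩ s'.biUnion f, g ω :=
          Finset.sum_nonneg fun ω _ => hg ω
        linarith
      exact h1.trans (by linarith)

def pairs {n : ℕ} (A B : Finset (Fin n)) : Finset (Sym2 (Fin n)) :=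
  (A ×ˢ B).image (fun x => s(x.1, x.2))

lemma pairs_injOn {n : ℕ} {A B : Finset (Fin n)} (hAB : Disjoint A B) :
    Set.InjOn (fun x : Fin n × Fin n => s(x.1, x.2)) ↑(A ×ˢ B) := by
  rintro ⟨a₁, b₁⟩ h₁ ⟨a₂, b₂⟩ h₂ h
  simp only [Finset.coe_product, Set.mem_prod] at h₁ h₂
  simp only [Sym2.eq_iff] at h
  rcases h with ⟨rfl, rfl⟩ | ⟨rfl, rfl⟩
  · rfl
  · exact absurd h₂.1 (Finset.disjoint_right.mp hAB h₁.2)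

lemma pairs_card {n : ℕ} {A B : Finset (Fin n)} (hAB : Disjoint A B) :
    (pairs A B).card = A.card * B.card := by
  rw [pairs, Finset.card_image_of_injOn (pairs_injOn hAB), Finset.card_product]

lemma edges_eq {n : ℕ} {A B : Finset (Fin n)} (hAB : Disjoint A B)
    (ω : Sym2 (Fin n) → Bool) :
    edgesBetween n ω A B = ∑ e ∈ pairs A B, (if ω e then (1:ℝ) else 0) := by
  classical
  rw [pairs, Finset.sum_image (fun x hx y hy h => pairs_injOn hAB
    (Finset.mem_coe.mpr hx) (Finset.mem_coe.mpr hy) h), Finset.sum_product]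
  rw [edgesBetween]
  refine Finset.sum_congr rfl fun a ha => Finset.sum_congr rfl fun b hb => ?_
  refine if_congr ?_ rfl rfl
  have hne : a ≠ b := fun h => Finset.disjoint_left.mp hAB ha (h ▸ hb)
  constructor
  · rintro h
    rcases (SimpleGraph.fromRel_adj _ a b).mp h with ⟨-, h | h⟩
    · exact h
    · rwa [Sym2.eq_swap] at h
  · intro h
    exact (SimpleGraph.fromRel_adj _ a b).mpr ⟨hne, Or.inl h⟩

lemma ratio_lt_one : 4 * Real.exp (-(25/12)) < 1 := by
  have h4 : Real.exp (2 * Real.log 2) = 4 := by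
    rw [show (2:ℝ) * Real.log 2 = Real.log 4 by
      rw [show (4:ℝ) = 2 ^ (2:ℕ) by norm_num, Real.log_pow]; push_cast; ring]
    rw [Real.exp_log (by norm_num)]
  have hlog : Real.log 2 < 0.6931471808 := Real.log_two_lt_d9
  have h1 : Real.exp (-(25/12)) < Real.exp (-(2 * Real.log 2)) := by
    apply Real.exp_lt_exp.mpr; nlinarith
  have h2 : Real.exp (-(2 * Real.log 2)) = 1/4 := by
    rw [Real.exp_neg, h4]; norm_num
  nlinarith

/-- **Edge counts between large disjoint sets in `G_{n,p}`**: if `np ≥ (log n)^{1+ε}`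
and `δ ≥ 5/√(np)`, then w.h.p. every pair of disjoint sets `A, B` of sizes at least
`δn` spans between `μ/2` and `3μ/2` edges, where `μ = |A||B|p`. -/
theorem gnp_edges_between_large_sets
    (ε : ℝ) (hε : 0 < ε)
    (p : ℕ → ℝ) (hp0 : ∀ n, 0 ≤ p n) (hp1 : ∀ n, p n ≤ 1)
    (hnp : ∀ n : ℕ, (Real.log n) ^ ((1 : ℝ) + ε) ≤ n * p n)
    (δ : ℕ → ℝ) (hδ : ∀ n, 5 / Real.sqrt (n * p n) ≤ δ n) :
    Filter.Tendsto
      (fun n =>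
        (gnpMeasure n (p n) (hp1 n)
          {ω | ∀ A B : Finset (Fin n), Disjoint A B →
            δ n * n ≤ (A.card : ℝ) → δ n * n ≤ (B.card : ℝ) →
            (A.card : ℝ) * B.card * p n / 2 ≤ edgesBetween n ω A B ∧
              edgesBetween n ω A B ≤ 3 * ((A.card : ℝ) * B.card * p n) / 2}).toReal)
      Filter.atTop (nhds 1) := by
  classical
  set r : ℝ := 4 * Real.exp (-(25/12)) with hr
  have hr0 : 0 ≤ r := by positivity
  have hr1 : r < 1 := ratio_lt_one
  -- the key bound for n ≥ 3
  have key : ∀ n : ℕ, 3 ≤ n →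
      1 - 2 * r ^ n ≤
        (gnpMeasure n (p n) (hp1 n)
          {ω | ∀ A B : Finset (Fin n), Disjoint A B →
            δ n * n ≤ (A.card : ℝ) → δ n * n ≤ (B.card : ℝ) →
            (A.card : ℝ) * B.card * p n / 2 ≤ edgesBetween n ω A B ∧
              edgesBetween n ω A B ≤ 3 * ((A.card : ℝ) * B.card * p n) / 2}).toReal := by
    intro n hn3
    set S : Set (Sym2 (Fin n) → Bool) := {ω | ∀ A B : Finset (Fin n), Disjoint A B →
            δ n * n ≤ (A.card : ℝ) → δ n * n ≤ (B.card : ℝ) →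
            (A.card : ℝ) * B.card * p n / 2 ≤ edgesBetween n ω A B ∧
              edgesBetween n ω A B ≤ 3 * ((A.card : ℝ) * B.card * p n) / 2} with hSdef
    have hP : IsProbabilityMeasure (gnpMeasure n (p n) (hp1 n)) := by
      unfold gnpMeasure; infer_instance
    have hS : MeasurableSet S := (Set.toFinite S).measurableSet
    have hnp0 : 0 < (n : ℝ) * p n := by
      refine lt_of_lt_of_le ?_ (hnp n)
      apply Real.rpow_pos_of_pos
      apply Real.log_pos
      exact_mod_cast lt_of_lt_of_le (by norm_num : (1:ℕ) < 3) hn3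
    -- the bad event as a finset
    set badF : Finset (Sym2 (Fin n) → Bool) := Finset.univ.filter (fun ω => ω ∉ S) with hbadF
    have hcoe : (↑badF : Set (Sym2 (Fin n) → Bool)) = Sᶜ := by ext ω; simp [hbadF]
    -- family of per-pair bad finsets
    set q : Finset (Fin n) × Finset (Fin n) → Prop := fun AB =>
      Disjoint AB.1 AB.2 ∧ δ n * n ≤ (AB.1.card : ℝ) ∧ δ n * n ≤ (AB.2.card : ℝ) with hq
    set F : Finset (Fin n) × Finset (Fin n) → Finset (Sym2 (Fin n) → Bool) := fun AB =>
      if q AB then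
        (Finset.univ.filter (fun ω =>
          (∑ e ∈ pairs AB.1 AB.2, (if ω e then (1:ℝ) else 0))
            ≤ ((pairs AB.1 AB.2).card : ℝ) * p n / 2))
        ∪ (Finset.univ.filter (fun ω =>
          3 * (((pairs AB.1 AB.2).card : ℝ) * p n) / 2
            ≤ ∑ e ∈ pairs AB.1 AB.2, (if ω e then (1:ℝ) else 0)))
      else ∅ with hF
    have hsub : badF ⊆ Finset.univ.biUnion F := by
      intro ω hω
      have hω' : ω ∉ S := (Finset.mem_filter.mp hω).2
      rw [hSdef, Set.mem_setOf_eq] at hω'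
      push_neg at hω'
      obtain ⟨A, B, hd, hA, hB, hviol⟩ := hω'
      refine Finset.mem_biUnion.mpr ⟨(A, B), Finset.mem_univ _, ?_⟩
      rw [hF]
      simp only
      rw [if_pos ⟨hd, hA, hB⟩]
      have hcard : ((pairs A B).card : ℝ) = (A.card : ℝ) * B.card := by
        rw [pairs_card hd]; push_cast; ring
      have hedge : edgesBetween n ω A B
          = ∑ e ∈ pairs A B, (if ω e then (1:ℝ) else 0) := edges_eq hd ω
      by_cases hlow : (A.card : ℝ) * B.card * p n / 2 ≤ edgesBetween n ω A B
      · apply Finset.mem_union_right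
        rw [Finset.mem_filter]
        exact ⟨Finset.mem_univ _, by rw [hcard, ← hedge]; linarith [hviol hlow]⟩
      · apply Finset.mem_union_left
        rw [Finset.mem_filter]
        exact ⟨Finset.mem_univ _, by rw [hcard, ← hedge]; linarith [lt_of_not_ge hlow]⟩
    have hFB : ∀ AB : Finset (Fin n) × Finset (Fin n),
        ∑ ω ∈ F AB, W n (p n) ω ≤ 2 * Real.exp (-(25 * (n:ℝ) / 12)) := by
      intro AB
      by_cases hqAB : q AB
      · rw [hF]; simp only; rw [if_pos hqAB]
        obtain ⟨hd, hA, hB⟩ := hqAB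
        -- μ ≥ 25 n
        have hs0 : 0 < Real.sqrt ((n:ℝ) * p n) := Real.sqrt_pos.mpr hnp0
        have hs2 : Real.sqrt ((n:ℝ) * p n) ^ 2 = (n:ℝ) * p n := Real.sq_sqrt hnp0.le
        have h5 : 5 ≤ δ n * Real.sqrt ((n:ℝ) * p n) := by
          have := hδ n
          rw [div_le_iff₀ hs0] at this
          exact this
        have hn0 : (0:ℝ) ≤ n := Nat.cast_nonneg n
        have hn0' : (0:ℝ) < n := by exact_mod_cast lt_of_lt_of_le (by norm_num : 0 < 3) hn3
        have ha : 5 * (n:ℝ) ≤ Real.sqrt ((n:ℝ) * p n) * AB.1.card := by nlinarith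
        have hb : 5 * (n:ℝ) ≤ Real.sqrt ((n:ℝ) * p n) * AB.2.card := by nlinarith
        have hab : 25 * (n:ℝ) * n ≤ ((n:ℝ) * p n) * (AB.1.card * AB.2.card) := by
          nlinarith [mul_le_mul ha hb (by positivity) (by positivity)]
        have hcard : ((pairs AB.1 AB.2).card : ℝ) = (AB.1.card : ℝ) * AB.2.card := by
          rw [pairs_card hd]; push_cast; ring
        have hμ : 25 * (n:ℝ) ≤ ((pairs AB.1 AB.2).card : ℝ) * p n := by
          rw [hcard]; nlinarith
        have hμB : Real.exp (-(((pairs AB.1 AB.2).card : ℝ) * p n / 12))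
            ≤ Real.exp (-(25 * (n:ℝ) / 12)) := by
          apply Real.exp_le_exp.mpr; linarith
        have hlow := tail_lower (hp0 n) (hp1 n) (pairs AB.1 AB.2)
        have hhigh := tail_upper (hp0 n) (hp1 n) (pairs AB.1 AB.2)
        have huni := Finset.sum_union_inter (s₁ := Finset.univ.filter (fun ω =>
          (∑ e ∈ pairs AB.1 AB.2, (if ω e then (1:ℝ) else 0))
            ≤ ((pairs AB.1 AB.2).card : ℝ) * p n / 2))
          (s₂ := Finset.univ.filter (fun ω =>
          3 * (((pairs AB.1 AB.2).card : ℝ) * p n) / 2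
            ≤ ∑ e ∈ pairs AB.1 AB.2, (if ω e then (1:ℝ) else 0)))
          (f := W n (p n))
        have hint : 0 ≤ ∑ ω ∈ (Finset.univ.filter (fun ω =>
          (∑ e ∈ pairs AB.1 AB.2, (if ω e then (1:ℝ) else 0))
            ≤ ((pairs AB.1 AB.2).card : ℝ) * p n / 2)) ∩ (Finset.univ.filter (fun ω =>
          3 * (((pairs AB.1 AB.2).card : ℝ) * p n) / 2
            ≤ ∑ e ∈ pairs AB.1 AB.2, (if ω e then (1:ℝ) else 0))),
            W n (p n) ω :=
          Finset.sum_nonneg fun ω _ => W_nonneg (hp0 n) (hp1 n) ω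
        linarith
      · rw [hF]; simp only; rw [if_neg hqAB]
        simp only [Finset.sum_empty]
        positivity
    -- total bound
    have htot : ∑ ω ∈ badF, W n (p n) ω ≤ 2 * r ^ n := by
      have h1 : ∑ ω ∈ badF, W n (p n) ω
          ≤ ∑ AB : Finset (Fin n) × Finset (Fin n), ∑ ω ∈ F AB, W n (p n) ω := by
        refine le_trans (Finset.sum_le_sum_of_subset_of_nonneg hsub
          (fun ω _ _ => W_nonneg (hp0 n) (hp1 n) ω)) ?_
        exact sum_biUnion_le' _ _ _ (W_nonneg (hp0 n) (hp1 n))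
      have h2 : ∑ AB : Finset (Fin n) × Finset (Fin n), ∑ ω ∈ F AB, W n (p n) ω
          ≤ (Fintype.card (Finset (Fin n) × Finset (Fin n))) •
              (2 * Real.exp (-(25 * (n:ℝ) / 12))) :=
        Finset.sum_le_card_nsmul _ _ _ (fun AB _ => hFB AB)
      have h3 : (Fintype.card (Finset (Fin n) × Finset (Fin n))) •
            (2 * Real.exp (-(25 * (n:ℝ) / 12)))
          = 2 * r ^ n := by
        rw [Fintype.card_prod, Fintype.card_finset, Fintype.card_fin, nsmul_eq_mul]
        have hexp : Real.exp (-(25 * (n:ℝ) / 12)) = Real.exp (-(25/12)) ^ n := by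
          rw [← Real.exp_nat_mul]; congr 1; ring
        rw [hexp, hr]
        push_cast
        rw [mul_pow]
        have h22 : (2:ℝ)^n * 2^n = 4^n := by rw [← mul_pow]; norm_num
        rw [← h22]; ring
      calc ∑ ω ∈ badF, W n (p n) ω ≤ _ := h1
        _ ≤ _ := h2
        _ = 2 * r ^ n := h3
    -- back to the measure
    have hPc : gnpMeasure n (p n) (hp1 n) Sᶜ
        = ENNReal.ofReal (∑ ω ∈ badF, W n (p n) ω) := by
      rw [← hcoe]; exact gnp_apply (hp0 n) (hp1 n) badF
    have hle : (gnpMeasure n (p n) (hp1 n) Sᶜ).toReal ≤ 2 * r ^ n := by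
      rw [hPc]
      rw [ENNReal.toReal_ofReal (Finset.sum_nonneg fun ω _ => W_nonneg (hp0 n) (hp1 n) ω)]
      exact htot
    have hadd : gnpMeasure n (p n) (hp1 n) S + gnpMeasure n (p n) (hp1 n) Sᶜ = 1 := by
      rw [measure_add_measure_compl hS, measure_univ]
    have haddR : (gnpMeasure n (p n) (hp1 n) S).toReal
        + (gnpMeasure n (p n) (hp1 n) Sᶜ).toReal = 1 := by
      rw [← ENNReal.toReal_add (measure_ne_top _ _) (measure_ne_top _ _), hadd,
        ENNReal.toReal_one]
    linarith
  -- squeeze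
  have hub : ∀ n : ℕ,
      (gnpMeasure n (p n) (hp1 n)
          {ω | ∀ A B : Finset (Fin n), Disjoint A B →
            δ n * n ≤ (A.card : ℝ) → δ n * n ≤ (B.card : ℝ) →
            (A.card : ℝ) * B.card * p n / 2 ≤ edgesBetween n ω A B ∧
              edgesBetween n ω A B ≤ 3 * ((A.card : ℝ) * B.card * p n) / 2}).toReal ≤ 1 := by
    intro n
    have hP : IsProbabilityMeasure (gnpMeasure n (p n) (hp1 n)) := by
      unfold gnpMeasure; infer_instance
    exact ENNReal.toReal_le_of_le_ofReal (by norm_num) (by simpa using prob_le_one)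
  have hlim : Filter.Tendsto (fun n : ℕ => 1 - 2 * r ^ n) Filter.atTop (nhds 1) := by
    have h0 : Filter.Tendsto (fun n : ℕ => r ^ n) Filter.atTop (nhds 0) :=
      tendsto_pow_atTop_nhds_zero_of_lt_one hr0 hr1
    have := (h0.const_mul 2).const_sub 1
    simpa using this
  refine tendsto_of_tendsto_of_tendsto_of_le_of_le' hlim tendsto_const_nhds ?_ ?_
  · filter_upwards [Filter.eventually_ge_atTop 3] with n hn using key n hn
  · filter_upwards with n using hub n

end Gnp17
end
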